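/- Let K be a real number with 0 < K < 1, and let A be a strictly stochastic strand symmetric matrix with rows (a,b,c,d), (e,f,g,h), (h,g,f,e), (d,c,b,a), with det(A) = K, a + d + g + f > 1, b ≠ c, and f > g. Set λ = a+d, μ = f+g, α = f-g, α' = h-e, β = a-d, β' = c-b. Then (λ,μ) ∈ Θ, (α,β) ∈ Ω_{λ,μ}, and α', β' satisfy |αβ - K/(λ+μ-1)|/(1-μ) < |β'| < 1-λ and α' = (αβ - K/(λ+μ-1))/β'. -/

import Mathlib

set_option maxHeartbeats 1000000


/-- The polynomial `r_K(z) = z³ + z - 2K`. -/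
def rK (K z : ℝ) : ℝ := z ^ 3 + z - 2 * K

/-- The set `Θ` of pairs `(λ,μ) ∈ (0,1)²` with `ν₀ + 1 ≤ λ + μ < 2` and
`|λ - μ| < min { 2 - λ - μ, √(r_K(λ+μ-1)/(λ+μ-1)) }`. -/
noncomputable def Theta (K ν : ℝ) : Set (ℝ × ℝ) :=
  {p | p.1 ∈ Set.Ioo (0 : ℝ) 1 ∧ p.2 ∈ Set.Ioo (0 : ℝ) 1 ∧
    ν + 1 ≤ p.1 + p.2 ∧ p.1 + p.2 < 2 ∧
    |p.1 - p.2| <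
      min (2 - p.1 - p.2) (Real.sqrt (rK K (p.1 + p.2 - 1) / (p.1 + p.2 - 1)))}

/-- The set `Ω_{λ,μ}`. -/
noncomputable def OmegaLM (K lam mu : ℝ) : Set (ℝ × ℝ) :=
  {p | 0 < p.1 ∧ p.1 < mu ∧ |p.2| < lam ∧
    |p.1 * p.2 - K / (lam + mu - 1)| < (1 - lam) * (1 - mu)}

lemma detSSM (a b c d e f g h : ℝ) :
    (!![a, b, c, d; e, f, g, h; h, g, f, e; d, c, b, a]).det =
      ((a+d)*(f+g)-(b+c)*(e+h))*((a-d)*(f-g)-(b-c)*(e-h)) := by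
  simp [Matrix.det_succ_row_zero, Fin.sum_univ_succ, Fin.succAbove]
  ring

theorem stmt_18 (K : ℝ) (hK0 : 0 < K) (hK1 : K < 1) (ν : ℝ)
    (hν : 0 < ν ∧ rK K ν = 0)
    (hνu : ∀ t : ℝ, 0 < t → rK K t = 0 → t = ν)
    (a b c d e f g h : ℝ)
    (A : Matrix (Fin 4) (Fin 4) ℝ)
    (hA : A = !![a, b, c, d; e, f, g, h; h, g, f, e; d, c, b, a])
    (hpos : ∀ i j, 0 < A i j)
    (hsum1 : a + b + c + d = 1) (hsum2 : e + f + g + h = 1)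
    (hdet : A.det = K)
    (hdiag : 1 < a + d + g + f) (hbc : b ≠ c) (hfg : g < f)
    (lam mu al al' be be' : ℝ)
    (hlam : lam = a + d) (hmu : mu = f + g) (hal : al = f - g)
    (hal' : al' = h - e) (hbe : be = a - d) (hbe' : be' = c - b) :
    (lam, mu) ∈ Theta K ν ∧ (al, be) ∈ OmegaLM K lam mu ∧
      |al * be - K / (lam + mu - 1)| / (1 - mu) < |be'| ∧ |be'| < 1 - lam ∧
      al' = (al * be - K / (lam + mu - 1)) / be' := by
  subst hA
  have ha : 0 < a := by simpa using hpos 0 0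
  have hb : 0 < b := by simpa using hpos 0 1
  have hc : 0 < c := by simpa using hpos 0 2
  have hd : 0 < d := by simpa using hpos 0 3
  have he : 0 < e := by simpa using hpos 1 0
  have hf : 0 < f := by simpa using hpos 1 1
  have hg : 0 < g := by simpa using hpos 1 2
  have hh : 0 < h := by simpa using hpos 1 3
  rw [detSSM] at hdet
  -- basic facts
  have hs0 : 0 < lam + mu - 1 := by rw [hlam, hmu]; linarith
  have hsne : lam + mu - 1 ≠ 0 := ne_of_gt hs0
  have hKs : K = (lam + mu - 1) * (al * be - al' * be') := by
    subst hlam hmu hal hal' hbe hbe'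
    linear_combination (-1 : ℝ) * hdet +
      ((f-g)*(a-d)-(h-e)*(c-b)) * ((-(b+c)) * hsum2 + ((f+g)-1) * hsum1)
  have hKdiv : al * be - K / (lam + mu - 1) = al' * be' := by
    field_simp
    linear_combination -hKs
  have hlam0 : 0 < lam := by rw [hlam]; linarith
  have hlam1 : lam < 1 := by rw [hlam]; linarith
  have hmu0 : 0 < mu := by rw [hmu]; linarith
  have hmu1 : mu < 1 := by rw [hmu]; linarith
  have hal'abs : |al'| < 1 - mu := by
    rw [abs_lt, hal', hmu]; constructor <;> linarith
  have hbe'abs : |be'| < 1 - lam := by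
    rw [abs_lt, hbe', hlam]; constructor <;> linarith
  have hbe'ne : be' ≠ 0 := by
    rw [hbe']; exact sub_ne_zero_of_ne (Ne.symm hbc)
  have hbe'pos : 0 < |be'| := abs_pos.mpr hbe'ne
  -- the positive quantity P
  have hP : 0 < a*g + d*f + b*e + c*h := by positivity
  have hid : (lam+mu-1)^2 + 1 - 2*(al*be) + 2*(al'*be')
      = (lam - mu)^2 + 4*(a*g + d*f + b*e + c*h) := by
    subst hlam hmu hal hal' hbe hbe'
    linear_combination (-2*(b+c) : ℝ) * hsum2 + (-2*(1-(f+g)) : ℝ) * hsum1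
  have hrKs : rK K (lam+mu-1)
      = (lam+mu-1) * ((lam - mu)^2 + 4*(a*g + d*f + b*e + c*h)) := by
    unfold rK
    linear_combination (-2 : ℝ) * hKs + (lam+mu-1) * hid
  have hrKpos : 0 < rK K (lam+mu-1) := by
    rw [hrKs]
    apply mul_pos hs0
    nlinarith [sq_nonneg (lam - mu)]
  have hν2 : ν ^ 3 + ν - 2 * K = 0 := (by simpa [rK] using hν.2)
  have hfac : 0 < (lam+mu-1)^2 + (lam+mu-1)*ν + ν^2 + 1 := by
    have h1 := mul_pos hs0 hν.1
    have h2 := sq_nonneg (lam+mu-1)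
    have h3 := sq_nonneg ν
    linarith
  have hprod : (lam+mu-1 - ν) * ((lam+mu-1)^2 + (lam+mu-1)*ν + ν^2 + 1)
      = rK K (lam+mu-1) := by
    simp only [rK]
    linear_combination (-1 : ℝ) * hν2
  have h5 : 0 < (lam+mu-1 - ν) * ((lam+mu-1)^2 + (lam+mu-1)*ν + ν^2 + 1) := by
    rw [hprod]; exact hrKpos
  have hνs : ν < lam + mu - 1 := by
    rcases mul_pos_iff.mp h5 with ⟨h6, _⟩ | ⟨_, h7⟩
    · linarith
    · linarith
  have hdivP : rK K (lam+mu-1) / (lam+mu-1)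
      = (lam - mu)^2 + 4*(a*g + d*f + b*e + c*h) := by
    rw [hrKs, mul_div_cancel_left₀ _ hsne]
  refine ⟨⟨⟨hlam0, hlam1⟩, ⟨hmu0, hmu1⟩, by linarith, by linarith, ?_⟩, ?_, ?_, hbe'abs, ?_⟩
  · apply lt_min
    · rw [abs_lt]; constructor <;> linarith
    · rw [hdivP]
      refine (Real.lt_sqrt (abs_nonneg _)).mpr ?_
      rw [sq_abs]; linarith
  · simp only [OmegaLM, Set.mem_setOf_eq]
    refine ⟨by rw [hal]; linarith, by rw [hal, hmu]; linarith, ?_, ?_⟩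
    · rw [abs_lt, hbe, hlam]; constructor <;> linarith
    · rw [hKdiv, abs_mul]
      calc |al'| * |be'| < (1 - mu) * (1 - lam) :=
            mul_lt_mul'' hal'abs hbe'abs (abs_nonneg _) (abs_nonneg _)
        _ = (1 - lam) * (1 - mu) := by ring
  · rw [hKdiv, abs_mul, div_lt_iff₀ (by linarith : (0:ℝ) < 1 - mu)]
    nlinarith [hbe'pos, hal'abs, abs_nonneg al']
  · rw [hKdiv, mul_div_assoc, div_self hbe'ne, mul_one]
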